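/- arXiv:1612.01599 — 8 statements merged into one kernel-verified Lean document; each statement's English description precedes it below -/
import Mathlib

section
/- The map U is multiplicative on squares: for every f in (ZMod 2)[r], U(f^2) = (U(f))^2. -/
open Polynomial

noncomputable section

/-- `F = r(r+1)^5` in `(ZMod 2)[r]`. -/
def Fp : Polynomial (ZMod 2) := X * (X + 1) ^ 5

/-- `G = r^5(r+1)` in `(ZMod 2)[r]`. -/
def Gp : Polynomial (ZMod 2) := X ^ 5 * (X + 1)

/-- The images `v_0, …, v_5` of `1, r, …, r^5` under `U`. -/
def v : ℕ → Polynomial (ZMod 2)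
  | 0 => 1
  | 1 => X
  | 2 => X ^ 2
  | 3 => X ^ 3 + X ^ 2 + X
  | 4 => X ^ 4
  | 5 => X ^ 5 + X ^ 4 + X
  | _ => 0

/-- `U` is the unique `ZMod 2`-linear map with `U (G^k r^i) = F^k v_i` for `0 ≤ i ≤ 5`. -/
def IsU (U : Polynomial (ZMod 2) →ₗ[ZMod 2] Polynomial (ZMod 2)) : Prop :=
  ∀ k i : ℕ, i ≤ 5 → U (Gp ^ k * X ^ i) = Fp ^ k * v i

/-- The basis set. -/
def Bset : Set (Polynomial (ZMod 2)) := {p | ∃ k i : ℕ, i ≤ 5 ∧ p = Gp ^ k * X ^ i}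

lemma Gmul_mem_span {p : Polynomial (ZMod 2)}
    (hp : p ∈ Submodule.span (ZMod 2) Bset) :
    Gp * p ∈ Submodule.span (ZMod 2) Bset := by
  induction hp using Submodule.span_induction with
  | mem x hx =>
    obtain ⟨k, i, hi, rfl⟩ := hx
    exact Submodule.subset_span ⟨k + 1, i, hi, by ring⟩
  | zero => simp
  | add x y _ _ hx hy => rw [mul_add]; exact add_mem hx hy
  | smul c x _ hx => rw [mul_smul_comm]; exact Submodule.smul_mem _ _ hx

lemma Xpow_mem_span (n : ℕ) : (X : Polynomial (ZMod 2)) ^ n ∈ Submodule.span (ZMod 2) Bset := by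
  induction n using Nat.strong_induction_on with
  | _ n ih =>
    rcases le_or_gt n 5 with h | h
    · exact Submodule.subset_span ⟨0, n, h, by simp⟩
    · obtain ⟨m, rfl⟩ : ∃ m, n = m + 6 := ⟨n - 6, by omega⟩
      have key : (X : Polynomial (ZMod 2)) ^ (m + 6) = Gp * X ^ m + X ^ (m + 5) := by
        rw [Gp]; ring_nf; reduce_mod_char
      rw [key]
      exact add_mem (Gmul_mem_span (ih m (by omega))) (ih (m + 5) (by omega))

lemma span_Bset_top : Submodule.span (ZMod 2) Bset = ⊤ := by
  rw [eq_top_iff]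
  rintro p -
  induction p using Polynomial.induction_on' with
  | add p q hp hq => exact add_mem hp hq
  | monomial n a =>
    rw [← Polynomial.smul_X_eq_monomial]
    exact Submodule.smul_mem _ _ (Xpow_mem_span n)

theorem U_sq (U : Polynomial (ZMod 2) →ₗ[ZMod 2] Polynomial (ZMod 2)) (hU : IsU U)
    (f : Polynomial (ZMod 2)) : U (f ^ 2) = (U f) ^ 2 := by
  have hf : f ∈ Submodule.span (ZMod 2) Bset := by rw [span_Bset_top]; trivial
  induction hf using Submodule.span_induction with
  | mem x hx =>
    obtain ⟨k, i, hi, rfl⟩ := hx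
    have hsq : (Gp ^ k * X ^ i) ^ 2 = Gp ^ (2 * k) * X ^ (2 * i) := by
      rw [mul_pow, ← pow_mul, ← pow_mul, mul_comm k 2, mul_comm i 2]
    rw [hsq, hU k i hi]
    interval_cases i
    · rw [hU (2*k) 0 (by norm_num), mul_pow, ← pow_mul, mul_comm k 2]
      simp only [v]; try ring
    · rw [hU (2*k) 2 (by norm_num), mul_pow, ← pow_mul, mul_comm k 2]
      simp only [v]; try ring
    · rw [hU (2*k) 4 (by norm_num), mul_pow, ← pow_mul, mul_comm k 2]
      simp only [v]; try ring
    · -- i = 3 : X^6 = Gp + X^5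
      have key : Gp ^ (2*k) * X ^ 6
          = Gp ^ (2*k+1) * X ^ 0 + Gp ^ (2*k) * X ^ 5 := by
        rw [Gp]; ring_nf; reduce_mod_char
      rw [key, map_add, hU (2*k+1) 0 (by norm_num), hU (2*k) 5 (by norm_num)]
      have idv : Fp * v 0 + v 5 = (v 3) ^ 2 := by
        show Fp * 1 + (X^5 + X^4 + X) = (X^3 + X^2 + X)^2
        rw [Fp]; ring_nf; reduce_mod_char
      rw [mul_pow, ← pow_mul, mul_comm k 2]
      calc Fp ^ (2*k+1) * v 0 + Fp ^ (2*k) * v 5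
          = Fp ^ (2*k) * (Fp * v 0 + v 5) := by ring
        _ = Fp ^ (2*k) * (v 3) ^ 2 := by rw [idv]
    · -- i = 4 : X^8 = Gp*(X^2+X+1) + X^5
      have key : Gp ^ (2*k) * X ^ 8
          = Gp ^ (2*k+1) * X ^ 2 + Gp ^ (2*k+1) * X ^ 1 + Gp ^ (2*k+1) * X ^ 0
            + Gp ^ (2*k) * X ^ 5 := by
        rw [Gp]; ring_nf; reduce_mod_char
      rw [key, map_add, map_add, map_add, hU (2*k+1) 2 (by norm_num),
        hU (2*k+1) 1 (by norm_num), hU (2*k+1) 0 (by norm_num), hU (2*k) 5 (by norm_num)]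
      have idv : Fp * (v 2 + v 1 + v 0) + v 5 = (v 4) ^ 2 := by
        show Fp * (X^2 + X + 1) + (X^5 + X^4 + X) = (X^4 : Polynomial (ZMod 2))^2
        rw [Fp]; ring_nf; reduce_mod_char
      rw [mul_pow, ← pow_mul, mul_comm k 2]
      calc Fp ^ (2*k+1) * v 2 + Fp ^ (2*k+1) * v 1 + Fp ^ (2*k+1) * v 0 + Fp ^ (2*k) * v 5
          = Fp ^ (2*k) * (Fp * (v 2 + v 1 + v 0) + v 5) := by ring
        _ = Fp ^ (2*k) * (v 4) ^ 2 := by rw [idv]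
    · -- i = 5 : X^10 = Gp*(X^4+X^3+X^2+X+1) + X^5
      have key : Gp ^ (2*k) * X ^ 10
          = Gp ^ (2*k+1) * X ^ 4 + Gp ^ (2*k+1) * X ^ 3 + Gp ^ (2*k+1) * X ^ 2
            + Gp ^ (2*k+1) * X ^ 1 + Gp ^ (2*k+1) * X ^ 0 + Gp ^ (2*k) * X ^ 5 := by
        rw [Gp]; ring_nf; reduce_mod_char
      rw [key, map_add, map_add, map_add, map_add, map_add,
        hU (2*k+1) 4 (by norm_num), hU (2*k+1) 3 (by norm_num),
        hU (2*k+1) 2 (by norm_num), hU (2*k+1) 1 (by norm_num),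
        hU (2*k+1) 0 (by norm_num), hU (2*k) 5 (by norm_num)]
      have idv : Fp * (v 4 + v 3 + v 2 + v 1 + v 0) + v 5 = (v 5) ^ 2 := by
        show Fp * (X^4 + (X^3 + X^2 + X) + X^2 + X + 1) + (X^5 + X^4 + X)
            = (X^5 + X^4 + X : Polynomial (ZMod 2))^2
        rw [Fp]; ring_nf; reduce_mod_char
      rw [mul_pow, ← pow_mul, mul_comm k 2]
      calc Fp ^ (2*k+1) * v 4 + Fp ^ (2*k+1) * v 3 + Fp ^ (2*k+1) * v 2
            + Fp ^ (2*k+1) * v 1 + Fp ^ (2*k+1) * v 0 + Fp ^ (2*k) * v 5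
          = Fp ^ (2*k) * (Fp * (v 4 + v 3 + v 2 + v 1 + v 0) + v 5) := by ring
        _ = Fp ^ (2*k) * (v 5) ^ 2 := by rw [idv]
  | zero => simp
  | add x y _ _ hx hy =>
    have h1 : (x + y) ^ 2 = x ^ 2 + y ^ 2 := by ring_nf; reduce_mod_char
    have h2 : (U x + U y) ^ 2 = (U x) ^ 2 + (U y) ^ 2 := by ring_nf; reduce_mod_char
    rw [h1, map_add, map_add, h2, hx, hy]
  | smul c x _ hx =>
    have hc : ∀ d : ZMod 2, d ^ 2 = d := by decide
    rw [_root_.smul_pow, hc, map_smul, map_smul, _root_.smul_pow, hc, hx]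

end
end

section
/- For every n ≥ 0, U(r^{n+6}) = U(r^{n+5}) + (r^6+r^5+r^2+r)·U(r^n). -/
open Polynomial

noncomputable section

lemma Xsplit (m : ℕ) : (X : Polynomial (ZMod 2)) ^ (m + 6) = Gp * X ^ m + X ^ (m + 5) := by
  have h2 : (X : Polynomial (ZMod 2)) ^ (m + 5) + X ^ (m + 5) = 0 :=
    CharTwo.add_self_eq_zero _
  simp only [Gp]
  linear_combination -h2

lemma U_mul_pow (U : Polynomial (ZMod 2) →ₗ[ZMod 2] Polynomial (ZMod 2)) (hU : IsU U) :
    ∀ n k : ℕ, U (Gp ^ k * X ^ n) = Fp ^ k * U (X ^ n) := by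
  intro n
  induction n using Nat.strong_induction_on with
  | _ n ih =>
    intro k
    by_cases hn : n ≤ 5
    · have h0 := hU 0 n hn
      simp only [pow_zero, one_mul] at h0
      rw [hU k n hn, h0]
    · obtain ⟨m, rfl⟩ : ∃ m, n = m + 6 := ⟨n - 6, by omega⟩
      have h1 : Gp ^ k * (X : Polynomial (ZMod 2)) ^ (m + 6)
          = Gp ^ (k + 1) * X ^ m + Gp ^ k * X ^ (m + 5) := by
        rw [Xsplit m]; ring
      have h2 := ih m (by omega) 1
      simp only [pow_one] at h2
      rw [h1, map_add, ih m (by omega) (k + 1), ih (m + 5) (by omega) k,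
        Xsplit m, map_add, h2]
      ring

lemma Fp_eq : Fp = X ^ 6 + X ^ 5 + X ^ 2 + X := by
  have h2 : (2 : Polynomial (ZMod 2)) = 0 := CharTwo.two_eq_zero
  simp only [Fp]
  linear_combination (2 * X ^ 5 + 5 * X ^ 4 + 5 * X ^ 3 + 2 * X ^ 2 :
    Polynomial (ZMod 2)) * h2

theorem U_rec (U : Polynomial (ZMod 2) →ₗ[ZMod 2] Polynomial (ZMod 2)) (hU : IsU U) (n : ℕ) :
    U (X ^ (n + 6)) = U (X ^ (n + 5)) + (X ^ 6 + X ^ 5 + X ^ 2 + X) * U (X ^ n) := by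
  have h := U_mul_pow U hU n 1
  simp only [pow_one] at h
  rw [Xsplit n, map_add, h, Fp_eq]
  ring

end
end

section
/- The polynomials C_n have the following degrees: (a) if n ≡ 1 or 5 (mod 6), then C_n has degree exactly n−1; (b) if n ≡ 3 or 4 (mod 6), then C_n has degree exactly n−2; (c) if n ≡ 0 or 2 (mod 6), then the coefficient of t^k in C_n vanishes for all k > n−2. -/
open Polynomial

noncomputable section

/-- The recurrence defining the polynomials `C_n` in `(ZMod 2)[t]`. -/
def IsC (C : ℕ → Polynomial (ZMod 2)) : Prop :=
  C 0 = 0 ∧ C 1 = 1 ∧ C 2 = 1 ∧ C 3 = X ∧ C 4 = X ^ 2 ∧ C 5 = X ^ 4 + X ^ 2 + X ∧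
  ∀ n : ℕ, C (n + 6) = C (n + 5) + (X ^ 6 + X ^ 5 + X ^ 2 + X) * C n + X ^ n * (X ^ 2 + X)

theorem coeff_mul_of_degree_le' {R : Type*} [Semiring R] {p q : R[X]} {a b : ℕ}
    (hp : p.degree ≤ a) (hq : q.degree ≤ b) :
    (p * q).coeff (a + b) = p.coeff a * q.coeff b := by
  rw [coeff_mul, Finset.sum_eq_single (a, b)]
  · intro ij hmem hne
    rw [Finset.HasAntidiagonal.mem_antidiagonal] at hmem
    have hne' : ¬(ij.1 = a ∧ ij.2 = b) := by
      intro h; exact hne (Prod.ext h.1 h.2)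
    rcases lt_or_ge a ij.1 with h | h
    · rw [coeff_eq_zero_of_degree_lt (lt_of_le_of_lt hp (by exact_mod_cast h)), zero_mul]
    · have hb : b < ij.2 := by omega
      rw [coeff_eq_zero_of_degree_lt (lt_of_le_of_lt hq (by exact_mod_cast hb)), mul_zero]
  · intro h; simp at h

theorem C_deg_bound {k a5 ak t : ℕ} {A B : (ZMod 2)[X]}
    (hA : A.degree ≤ (a5 : WithBot ℕ)) (hB : B.degree ≤ (ak : WithBot ℕ))
    (h1 : a5 ≤ t) (h2 : 6 + ak ≤ t) (h3 : k + 2 ≤ t) :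
    (A + (X ^ 6 + X ^ 5 + X ^ 2 + X) * B + X ^ k * (X ^ 2 + X)).degree ≤ (t : WithBot ℕ) := by
  have hf : (X ^ 6 + X ^ 5 + X ^ 2 + X : (ZMod 2)[X]).degree ≤ 6 := by compute_degree
  have hg : (X ^ 2 + X : (ZMod 2)[X]).degree ≤ 2 := by compute_degree
  refine le_trans (degree_add_le _ _) (max_le (le_trans (degree_add_le _ _) (max_le ?_ ?_)) ?_)
  · exact le_trans hA (by exact_mod_cast h1)
  · refine le_trans (degree_mul_le _ _) ?_
    refine le_trans (add_le_add hf hB) ?_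
    rw [show ((6 : WithBot ℕ)) = ((6 : ℕ) : WithBot ℕ) by norm_num, ← Nat.cast_add]
    exact_mod_cast h2
  · refine le_trans (degree_mul_le _ _) ?_
    refine le_trans (add_le_add (degree_X_pow_le k) hg) ?_
    rw [show ((2 : WithBot ℕ)) = ((2 : ℕ) : WithBot ℕ) by norm_num, ← Nat.cast_add]
    exact_mod_cast h3

theorem C_coeff_top {k a5 ak t : ℕ} {A B : (ZMod 2)[X]}
    (hA : A.degree ≤ (a5 : WithBot ℕ)) (hB : B.degree ≤ (ak : WithBot ℕ)) (hBc : B.coeff ak = 1)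
    (h1 : a5 < t) (h2 : t = 6 + ak) (h3 : k + 2 < t) :
    (A + (X ^ 6 + X ^ 5 + X ^ 2 + X) * B + X ^ k * (X ^ 2 + X)).coeff t = 1 := by
  have hf : (X ^ 6 + X ^ 5 + X ^ 2 + X : (ZMod 2)[X]).degree ≤ 6 := by compute_degree
  have hg : (X ^ 2 + X : (ZMod 2)[X]).degree ≤ 2 := by compute_degree
  have hgp : (X ^ k * (X ^ 2 + X) : (ZMod 2)[X]).degree ≤ ((k + 2 : ℕ) : WithBot ℕ) := by
    refine le_trans (degree_mul_le _ _) ?_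
    refine le_trans (add_le_add (degree_X_pow_le k) hg) ?_
    rw [show ((2 : WithBot ℕ)) = ((2 : ℕ) : WithBot ℕ) by norm_num, ← Nat.cast_add]
  have hA0 : A.coeff t = 0 :=
    coeff_eq_zero_of_degree_lt (lt_of_le_of_lt hA (by exact_mod_cast h1))
  have hg0 : (X ^ k * (X ^ 2 + X) : (ZMod 2)[X]).coeff t = 0 :=
    coeff_eq_zero_of_degree_lt (lt_of_le_of_lt hgp (by exact_mod_cast h3))
  have hfc : (X ^ 6 + X ^ 5 + X ^ 2 + X : (ZMod 2)[X]).coeff 6 = 1 := by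
    simp [coeff_X_pow, coeff_X]
  subst h2
  rw [coeff_add, coeff_add, hA0, hg0, coeff_mul_of_degree_le' hf hB, hfc, hBc]
  ring

theorem C_key (C : ℕ → Polynomial (ZMod 2)) (hC : IsC C) (n : ℕ) :
    ((n % 6 = 1 ∨ n % 6 = 5) →
      (C n).degree ≤ ((n - 1 : ℕ) : WithBot ℕ) ∧ (C n).coeff (n - 1) = 1) ∧
    ((n % 6 = 3 ∨ n % 6 = 4) →
      (C n).degree ≤ ((n - 2 : ℕ) : WithBot ℕ) ∧ (C n).coeff (n - 2) = 1) ∧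
    ((n % 6 = 0 ∨ n % 6 = 2) → (C n).degree ≤ ((n - 2 : ℕ) : WithBot ℕ)) := by
  obtain ⟨h0, h1, h2, h3, h4, h5, hrec⟩ := hC
  induction n using Nat.strong_induction_on with
  | _ n ih =>
  rcases Nat.lt_or_ge n 7 with hn | hn
  · interval_cases n
    · refine ⟨fun h => by omega, fun h => by omega, fun h => ?_⟩
      rw [h0]; simp
    · refine ⟨fun h => ?_, fun h => by omega, fun h => by omega⟩
      rw [h1]; constructor
      · simpa using degree_one_le
      · simp
    · refine ⟨fun h => by omega, fun h => by omega, fun h => ?_⟩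
      rw [h2]; simpa using degree_one_le
    · refine ⟨fun h => by omega, fun h => ?_, fun h => by omega⟩
      rw [h3]; exact ⟨by simpa using degree_X_le, by simp⟩
    · refine ⟨fun h => by omega, fun h => ?_, fun h => by omega⟩
      rw [h4]; exact ⟨by simpa using degree_X_pow_le 2, by simp⟩
    · refine ⟨fun h => ?_, fun h => by omega, fun h => by omega⟩
      rw [h5]
      exact ⟨by compute_degree!, by simp [coeff_X_pow, coeff_X]⟩
    · refine ⟨fun h => by omega, fun h => by omega, fun h => ?_⟩
      have hr := hrec 0
      norm_num at hr
      rw [hr, h0, h5]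
      have : ((X ^ 4 + X ^ 2 + X : (ZMod 2)[X]) + (X ^ 6 + X ^ 5 + X ^ 2 + X) * 0
          + 1 * (X ^ 2 + X)).degree ≤ ((4 : ℕ) : WithBot ℕ) := by
        rw [mul_zero, add_zero, one_mul]
        refine le_trans (degree_add_le _ _) (max_le (by compute_degree!) (by compute_degree!))
      simpa using this
  · obtain ⟨m, rfl⟩ : ∃ m, n = m + 7 := ⟨n - 7, by omega⟩
    have pk := ih (m + 1) (by omega)
    have p5 := ih (m + 6) (by omega)
    have hr := hrec (m + 1)
    rw [show m + 1 + 6 = m + 7 from rfl, show m + 1 + 5 = m + 6 from rfl] at hr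
    have h6 : (m + 1) % 6 = 0 ∨ (m + 1) % 6 = 1 ∨ (m + 1) % 6 = 2 ∨ (m + 1) % 6 = 3 ∨
        (m + 1) % 6 = 4 ∨ (m + 1) % 6 = 5 := by omega
    rcases h6 with hk | hk | hk | hk | hk | hk
    · -- k ≡ 0 : n = k+6 ≡ 0, class c; C k class c (deg ≤ m-1, m ≥ 5), C (m+6) class a
      refine ⟨fun h => by omega, fun h => by omega, fun h => ?_⟩
      have hAk := pk.2.2 (Or.inl (by omega))
      have hA5 := (p5.1 (Or.inr (by omega))).1
      rw [show m + 1 - 2 = m - 1 from rfl] at hAk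
      rw [show m + 6 - 1 = m + 5 from rfl] at hA5
      rw [show m + 7 - 2 = m + 5 from rfl, hr]
      exact C_deg_bound hA5 hAk (by omega) (by omega) (by omega)
    · -- k ≡ 1 : n ≡ 1, class a; C k class a (deg ≤ m, coeff), C (m+6) class c
      refine ⟨fun h => ?_, fun h => by omega, fun h => by omega⟩
      obtain ⟨hAk, hck⟩ := pk.1 (Or.inl (by omega))
      have hA5 := p5.2.2 (Or.inl (by omega))
      rw [show m + 1 - 1 = m from rfl] at hAk hck
      rw [show m + 6 - 2 = m + 4 from rfl] at hA5
      rw [show m + 7 - 1 = m + 6 from rfl, hr]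
      exact ⟨C_deg_bound hA5 hAk (by omega) (by omega) (by omega),
        C_coeff_top hA5 hAk hck (by omega) (by omega) (by omega)⟩
    · -- k ≡ 2 : n ≡ 2, class c; C k class c (deg ≤ m-1), C (m+6) class a
      refine ⟨fun h => by omega, fun h => by omega, fun h => ?_⟩
      have hAk := pk.2.2 (Or.inr (by omega))
      have hA5 := (p5.1 (Or.inl (by omega))).1
      rw [show m + 1 - 2 = m - 1 from rfl] at hAk
      rw [show m + 6 - 1 = m + 5 from rfl] at hA5
      rw [show m + 7 - 2 = m + 5 from rfl, hr]
      exact C_deg_bound hA5 hAk (by omega) (by omega) (by omega)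
    · -- k ≡ 3 : n ≡ 3, class b; C k class b (deg ≤ m-1, coeff), C (m+6) class c
      refine ⟨fun h => by omega, fun h => ?_, fun h => by omega⟩
      obtain ⟨hAk, hck⟩ := pk.2.1 (Or.inl (by omega))
      have hA5 := p5.2.2 (Or.inr (by omega))
      rw [show m + 1 - 2 = m - 1 from rfl] at hAk hck
      rw [show m + 6 - 2 = m + 4 from rfl] at hA5
      rw [show m + 7 - 2 = m + 5 from rfl, hr]
      exact ⟨C_deg_bound hA5 hAk (by omega) (by omega) (by omega),
        C_coeff_top hA5 hAk hck (by omega) (by omega) (by omega)⟩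
    · -- k ≡ 4 : n ≡ 4, class b; C k class b, C (m+6) class b (deg ≤ m+4)
      refine ⟨fun h => by omega, fun h => ?_, fun h => by omega⟩
      obtain ⟨hAk, hck⟩ := pk.2.1 (Or.inr (by omega))
      have hA5 := (p5.2.1 (Or.inl (by omega))).1
      rw [show m + 1 - 2 = m - 1 from rfl] at hAk hck
      rw [show m + 6 - 2 = m + 4 from rfl] at hA5
      rw [show m + 7 - 2 = m + 5 from rfl, hr]
      exact ⟨C_deg_bound hA5 hAk (by omega) (by omega) (by omega),
        C_coeff_top hA5 hAk hck (by omega) (by omega) (by omega)⟩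
    · -- k ≡ 5 : n ≡ 5, class a; C k class a (deg ≤ m, coeff), C (m+6) class b
      refine ⟨fun h => ?_, fun h => by omega, fun h => by omega⟩
      obtain ⟨hAk, hck⟩ := pk.1 (Or.inr (by omega))
      have hA5 := (p5.2.1 (Or.inr (by omega))).1
      rw [show m + 1 - 1 = m from rfl] at hAk hck
      rw [show m + 6 - 2 = m + 4 from rfl] at hA5
      rw [show m + 7 - 1 = m + 6 from rfl, hr]
      exact ⟨C_deg_bound hA5 hAk (by omega) (by omega) (by omega),
        C_coeff_top hA5 hAk hck (by omega) (by omega) (by omega)⟩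

theorem C_degrees (C : ℕ → Polynomial (ZMod 2)) (hC : IsC C) (n : ℕ) :
    ((n % 6 = 1 ∨ n % 6 = 5) → (C n).degree = ((n - 1 : ℕ) : WithBot ℕ)) ∧
    ((n % 6 = 3 ∨ n % 6 = 4) → (C n).degree = ((n - 2 : ℕ) : WithBot ℕ)) ∧
    ((n % 6 = 0 ∨ n % 6 = 2) → ∀ k : ℕ, n - 2 < k → (C n).coeff k = 0) := by
  obtain ⟨ha, hb, hc⟩ := C_key C hC n
  refine ⟨fun h => ?_, fun h => ?_, fun h k hk => ?_⟩
  · obtain ⟨hd, hcf⟩ := ha h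
    refine le_antisymm hd (le_degree_of_ne_zero ?_)
    rw [hcf]; exact one_ne_zero
  · obtain ⟨hd, hcf⟩ := hb h
    refine le_antisymm hd (le_degree_of_ne_zero ?_)
    rw [hcf]; exact one_ne_zero
  · exact coeff_eq_zero_of_degree_lt (lt_of_le_of_lt (hc h) (by exact_mod_cast hk))

end
end

section
/- If C_n lies in the Z/2-linear span of the polynomials C_k with k < n, then n ≡ 0 or 2 (mod 6). -/
open Polynomial

noncomputable section

lemma degF : (X ^ 6 + X ^ 5 + X ^ 2 + X : Polynomial (ZMod 2)).degree = 6 := by compute_degree!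

lemma castle {a b : ℕ} (h : a ≤ b) : (a : WithBot ℕ) ≤ (b : WithBot ℕ) := by exact_mod_cast h

lemma castlt {a b : ℕ} (h : a < b) : (a : WithBot ℕ) < (b : WithBot ℕ) := by exact_mod_cast h

lemma degG (n : ℕ) {f : ℕ} (h : n + 2 = f) :
    ((X : Polynomial (ZMod 2)) ^ n * (X ^ 2 + X)).degree = (f : WithBot ℕ) := by
  subst h
  rw [degree_mul, degree_X_pow, show ((X ^ 2 + X : Polynomial (ZMod 2))).degree = 2 by
    compute_degree!]
  push_cast; ring

lemma degFmul (p : Polynomial (ZMod 2)) {e f : ℕ} (h : p.degree = (e : WithBot ℕ))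
    (hef : e + 6 = f) :
    ((X ^ 6 + X ^ 5 + X ^ 2 + X) * p).degree = (f : WithBot ℕ) := by
  subst hef
  rw [degree_mul, degF, h]; push_cast; ring

lemma degFmul_le (p : Polynomial (ZMod 2)) {e f : ℕ} (h : p.degree ≤ (e : WithBot ℕ))
    (hef : e + 6 = f) :
    ((X ^ 6 + X ^ 5 + X ^ 2 + X) * p).degree ≤ (f : WithBot ℕ) := by
  subst hef
  rw [degree_mul, degF]
  calc (6 : WithBot ℕ) + p.degree ≤ 6 + (e : WithBot ℕ) := add_le_add_right h 6
    _ = ((e + 6 : ℕ) : WithBot ℕ) := by push_cast; ring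

lemma deg3eq (a b c : Polynomial (ZMod 2)) {d : WithBot ℕ} (hb : b.degree = d)
    (ha : a.degree < d) (hc : c.degree < d) : (a + b + c).degree = d := by
  rw [degree_add_eq_left_of_degree_lt, degree_add_eq_right_of_degree_lt] <;>
    simp [hb, ha, hc, degree_add_eq_right_of_degree_lt (hb ▸ ha)]

lemma deg3le (a b c : Polynomial (ZMod 2)) {d : WithBot ℕ} (ha : a.degree ≤ d)
    (hb : b.degree ≤ d) (hc : c.degree ≤ d) : (a + b + c).degree ≤ d :=
  le_trans (degree_add_le _ _) (max_le (le_trans (degree_add_le _ _) (max_le ha hb)) hc)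

lemma key (C : ℕ → Polynomial (ZMod 2)) (hC : IsC C) : ∀ m : ℕ,
    (C (6*m)).degree < ((6*m : ℕ) : WithBot ℕ) ∧
    (C (6*m)).degree ≤ ((6*m - 2 : ℕ) : WithBot ℕ) ∧
    (C (6*m+1)).degree = ((6*m : ℕ) : WithBot ℕ) ∧
    (C (6*m+2)).degree ≤ ((6*m : ℕ) : WithBot ℕ) ∧
    (C (6*m+3)).degree = ((6*m+1 : ℕ) : WithBot ℕ) ∧
    (C (6*m+4)).degree = ((6*m+2 : ℕ) : WithBot ℕ) ∧
    (C (6*m+5)).degree = ((6*m+4 : ℕ) : WithBot ℕ) := by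
  obtain ⟨e0, e1, e2, e3, e4, e5, rec⟩ := hC
  intro m
  induction m with
  | zero =>
    refine ⟨?_, ?_, ?_, ?_, ?_, ?_, ?_⟩
    · show (C 0).degree < _
      rw [e0, degree_zero]
      exact bot_lt_iff_ne_bot.2 (by simp)
    · show (C 0).degree ≤ _
      rw [e0, degree_zero]; exact bot_le
    · show (C 1).degree = _
      rw [e1, degree_one]
      norm_num
    · show (C 2).degree ≤ _
      rw [e2, degree_one]
      norm_num
    · show (C 3).degree = _
      rw [e3, degree_X]
      norm_num
    · show (C 4).degree = _
      rw [e4, degree_X_pow]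
    · show (C 5).degree = ((4 : ℕ) : WithBot ℕ)
      rw [e5]; compute_degree!
  | succ m ih =>
    obtain ⟨h0, h0', h1, h2, h3, h4, h5⟩ := ih
    have r0 : C (6*m+6) = C (6*m+5) + (X^6+X^5+X^2+X) * C (6*m) + X^(6*m)*(X^2+X) := rec (6*m)
    have r1 : C (6*m+7) = C (6*m+6) + (X^6+X^5+X^2+X) * C (6*m+1) + X^(6*m+1)*(X^2+X) := by
      rw [show 6*m+7 = (6*m+1)+6 by ring, show (6*m+1)+5 = 6*m+6 by ring] at *
      exact rec _
    have r2 : C (6*m+8) = C (6*m+7) + (X^6+X^5+X^2+X) * C (6*m+2) + X^(6*m+2)*(X^2+X) := by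
      rw [show 6*m+8 = (6*m+2)+6 by ring, show (6*m+2)+5 = 6*m+7 by ring] at *
      exact rec _
    have r3 : C (6*m+9) = C (6*m+8) + (X^6+X^5+X^2+X) * C (6*m+3) + X^(6*m+3)*(X^2+X) := by
      rw [show 6*m+9 = (6*m+3)+6 by ring, show (6*m+3)+5 = 6*m+8 by ring] at *
      exact rec _
    have r4 : C (6*m+10) = C (6*m+9) + (X^6+X^5+X^2+X) * C (6*m+4) + X^(6*m+4)*(X^2+X) := by
      rw [show 6*m+10 = (6*m+4)+6 by ring, show (6*m+4)+5 = 6*m+9 by ring] at *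
      exact rec _
    have r5 : C (6*m+11) = C (6*m+10) + (X^6+X^5+X^2+X) * C (6*m+5) + X^(6*m+5)*(X^2+X) := by
      rw [show 6*m+11 = (6*m+5)+6 by ring, show (6*m+5)+5 = 6*m+10 by ring] at *
      exact rec _
    have d6 : (C (6*m+6)).degree ≤ ((6*m+4 : ℕ) : WithBot ℕ) := by
      rw [r0]
      refine deg3le _ _ _ (h5.le) ?_ ((degG (6*m) rfl).le.trans (castle (by omega)))
      rcases m with _ | m'
      · rw [show 6*0 = 0 from rfl, e0, mul_zero, degree_zero]; exact bot_le
      · exact degFmul_le _ h0' (by omega)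
    have d7 : (C (6*m+7)).degree = ((6*m+6 : ℕ) : WithBot ℕ) := by
      rw [r1]
      exact deg3eq _ _ _ (degFmul _ h1 (by omega))
        (lt_of_le_of_lt d6 (castlt (by omega)))
        ((degG (6*m+1) rfl).trans_lt (castlt (by omega)))
    have d8 : (C (6*m+8)).degree ≤ ((6*m+6 : ℕ) : WithBot ℕ) := by
      rw [r2]
      exact deg3le _ _ _ d7.le (degFmul_le _ h2 (by omega))
        ((degG (6*m+2) rfl).le.trans (castle (by omega)))
    have d9 : (C (6*m+9)).degree = ((6*m+7 : ℕ) : WithBot ℕ) := by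
      rw [r3]
      exact deg3eq _ _ _ (degFmul _ h3 (by omega))
        (lt_of_le_of_lt d8 (castlt (by omega)))
        ((degG (6*m+3) rfl).trans_lt (castlt (by omega)))
    have d10 : (C (6*m+10)).degree = ((6*m+8 : ℕ) : WithBot ℕ) := by
      rw [r4]
      exact deg3eq _ _ _ (degFmul _ h4 (by omega))
        (d9.trans_lt (castlt (by omega)))
        ((degG (6*m+4) rfl).trans_lt (castlt (by omega)))
    have d11 : (C (6*m+11)).degree = ((6*m+10 : ℕ) : WithBot ℕ) := by
      rw [r5]
      exact deg3eq _ _ _ (degFmul _ h5 (by omega))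
        (d10.trans_lt (castlt (by omega)))
        ((degG (6*m+5) rfl).trans_lt (castlt (by omega)))
    refine ⟨?_, ?_, ?_, ?_, ?_, ?_, ?_⟩
    · rw [show 6*(m+1) = 6*m+6 by ring]
      exact lt_of_le_of_lt d6 (castlt (by omega))
    · rw [show (6*(m+1)-2 : ℕ) = 6*m+4 by omega, show 6*(m+1) = 6*m+6 by ring]
      exact d6
    · rw [show 6*(m+1)+1 = 6*m+7 by ring, show (6*(m+1) : ℕ) = 6*m+6 by ring]
      exact d7
    · rw [show 6*(m+1)+2 = 6*m+8 by ring, show (6*(m+1) : ℕ) = 6*m+6 by ring]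
      exact d8
    · rw [show 6*(m+1)+3 = 6*m+9 by ring, show (6*(m+1)+1 : ℕ) = 6*m+7 by ring]
      exact d9
    · rw [show 6*(m+1)+4 = 6*m+10 by ring, show (6*(m+1)+2 : ℕ) = 6*m+8 by ring]
      exact d10
    · rw [show 6*(m+1)+5 = 6*m+11 by ring, show (6*(m+1)+4 : ℕ) = 6*m+10 by ring]
      exact d11

lemma deg_C_lt (C : ℕ → Polynomial (ZMod 2)) (hC : IsC C) (k d : ℕ)
    (H0 : k % 6 = 0 → k ≤ d) (H1 : k % 6 = 1 → k - 1 < d) (H2 : k % 6 = 2 → k - 2 < d)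
    (H3 : k % 6 = 3 → k - 2 < d) (H4 : k % 6 = 4 → k - 2 < d) (H5 : k % 6 = 5 → k - 1 < d) :
    (C k).degree < (d : WithBot ℕ) := by
  obtain ⟨h0, _, h1, h2, h3, h4, h5⟩ := key C hC (k / 6)
  rcases (by omega : k % 6 = 0 ∨ k % 6 = 1 ∨ k % 6 = 2 ∨ k % 6 = 3 ∨ k % 6 = 4 ∨ k % 6 = 5)
    with hs | hs | hs | hs | hs | hs
  · rw [show k = 6 * (k / 6) by omega]
    exact lt_of_lt_of_le h0 (castle (by have := H0 hs; omega))
  · rw [show k = 6 * (k / 6) + 1 by omega, h1]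
    exact castlt (by have := H1 hs; omega)
  · rw [show k = 6 * (k / 6) + 2 by omega]
    exact lt_of_le_of_lt h2 (castlt (by have := H2 hs; omega))
  · rw [show k = 6 * (k / 6) + 3 by omega, h3]
    exact castlt (by have := H3 hs; omega)
  · rw [show k = 6 * (k / 6) + 4 by omega, h4]
    exact castlt (by have := H4 hs; omega)
  · rw [show k = 6 * (k / 6) + 5 by omega, h5]
    exact castlt (by have := H5 hs; omega)

theorem C_span_converse (C : ℕ → Polynomial (ZMod 2)) (hC : IsC C) (n : ℕ)
    (h : C n ∈ Submodule.span (ZMod 2) {p : Polynomial (ZMod 2) | ∃ k < n, p = C k}) :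
    n % 6 = 0 ∨ n % 6 = 2 := by
  by_contra hcon
  push_neg at hcon
  obtain ⟨hc0, hc2⟩ := hcon
  obtain ⟨d, hd, hlt⟩ : ∃ d : ℕ, (C n).degree = (d : WithBot ℕ) ∧
      ∀ k, k < n → (C k).degree < (d : WithBot ℕ) := by
    obtain ⟨_, _, K1, _, K3, K4, K5⟩ := key C hC (n / 6)
    rcases (by omega : n % 6 = 1 ∨ n % 6 = 3 ∨ n % 6 = 4 ∨ n % 6 = 5) with hr | hr | hr | hr
    · exact ⟨6 * (n / 6), by have := K1; rwa [show 6 * (n / 6) + 1 = n by omega] at this,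
        fun k hk => deg_C_lt C hC k _ (fun h => by omega) (fun h => by omega)
          (fun h => by omega) (fun h => by omega) (fun h => by omega) (fun h => by omega)⟩
    · exact ⟨6 * (n / 6) + 1, by have := K3; rwa [show 6 * (n / 6) + 3 = n by omega] at this,
        fun k hk => deg_C_lt C hC k _ (fun h => by omega) (fun h => by omega)
          (fun h => by omega) (fun h => by omega) (fun h => by omega) (fun h => by omega)⟩
    · exact ⟨6 * (n / 6) + 2, by have := K4; rwa [show 6 * (n / 6) + 4 = n by omega] at this,
        fun k hk => deg_C_lt C hC k _ (fun h => by omega) (fun h => by omega)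
          (fun h => by omega) (fun h => by omega) (fun h => by omega) (fun h => by omega)⟩
    · exact ⟨6 * (n / 6) + 4, by have := K5; rwa [show 6 * (n / 6) + 5 = n by omega] at this,
        fun k hk => deg_C_lt C hC k _ (fun h => by omega) (fun h => by omega)
          (fun h => by omega) (fun h => by omega) (fun h => by omega) (fun h => by omega)⟩
  have hspan : Submodule.span (ZMod 2) {p : Polynomial (ZMod 2) | ∃ k < n, p = C k} ≤
      Polynomial.degreeLT (ZMod 2) d := by
    rw [Submodule.span_le]
    rintro p ⟨k, hk, rfl⟩
    simpa [Polynomial.mem_degreeLT] using hlt k hk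
  have hmem := hspan h
  rw [Polynomial.mem_degreeLT, hd] at hmem
  exact absurd hmem (lt_irrefl _)

end
end

section
/- U(F^i) = G^i for i = 0, 1, 2, 3, 4, and U(F^5) = G^5 + F. -/
open Polynomial

noncomputable section

set_option maxHeartbeats 2000000 in
theorem U_powers_of_F (U : Polynomial (ZMod 2) →ₗ[ZMod 2] Polynomial (ZMod 2)) (hU : IsU U) :
    (∀ i : ℕ, i ≤ 4 → U (Fp ^ i) = Gp ^ i) ∧ U (Fp ^ 5) = Gp ^ 5 + Fp := by
  have h2 : (2 : Polynomial (ZMod 2)) = 0 := CharTwo.two_eq_zero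
  constructor
  · intro i hi
    interval_cases i
    · have key : Fp ^ 0 = Gp^0 * X^0 := by
        unfold Fp Gp
        ring
      rw [key]
      try simp only [map_add]
      rw [hU 0 0 (by norm_num)]
      rw [show v 0 = (1:Polynomial (ZMod 2)) from rfl]
      unfold Fp Gp
      ring
    · have key : Fp ^ 1 = Gp^1 * X^0 + Gp^0 * X^2 + Gp^0 * X^1 := by
        unfold Fp Gp
        linear_combination (2*X^2 + 5*X^3 + 5*X^4 + 2*X^5 : Polynomial (ZMod 2)) * h2
      rw [key]
      try simp only [map_add]
      rw [hU 1 0 (by norm_num), hU 0 2 (by norm_num), hU 0 1 (by norm_num)]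
      rw [show v 0 = (1:Polynomial (ZMod 2)) from rfl, show v 1 = (X:Polynomial (ZMod 2)) from rfl, show v 2 = X^2 from rfl]
      unfold Fp Gp
      linear_combination (1*X^1 + 3*X^2 + 5*X^3 + 5*X^4 + 2*X^5 : Polynomial (ZMod 2)) * h2
    · have key : Fp ^ 2 = Gp^2 * X^0 + Gp^0 * X^4 + Gp^0 * X^2 := by
        unfold Fp Gp
        linear_combination (5*X^3 + 22*X^4 + 60*X^5 + 105*X^6 + 126*X^7 + 105*X^8 + 60*X^9 + 22*X^10 + 4*X^11 : Polynomial (ZMod 2)) * h2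
      rw [key]
      try simp only [map_add]
      rw [hU 2 0 (by norm_num), hU 0 4 (by norm_num), hU 0 2 (by norm_num)]
      rw [show v 0 = (1:Polynomial (ZMod 2)) from rfl, show v 2 = X^2 from rfl, show v 4 = X^4 from rfl]
      unfold Fp Gp
      linear_combination (1*X^2 + 5*X^3 + 23*X^4 + 60*X^5 + 105*X^6 + 126*X^7 + 105*X^8 + 60*X^9 + 22*X^10 + 4*X^11 : Polynomial (ZMod 2)) * h2
    · have key : Fp ^ 3 = Gp^3 * X^0 + Gp^2 * X^2 + Gp^2 * X^1 + Gp^1 * X^4 + Gp^1 * X^2 + Gp^1 * X^0 + Gp^0 * X^4 + Gp^0 * X^3 := by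
        unfold Fp Gp
        linear_combination (7*X^4 + 52*X^5 + 227*X^6 + 682*X^7 + 1501*X^8 + 2502*X^9 + 3217*X^10 + 3217*X^11 + 2501*X^12 + 1500*X^13 + 682*X^14 + 227*X^15 + 51*X^16 + 6*X^17 : Polynomial (ZMod 2)) * h2
      rw [key]
      try simp only [map_add]
      rw [hU 3 0 (by norm_num), hU 2 2 (by norm_num), hU 2 1 (by norm_num), hU 1 4 (by norm_num), hU 1 2 (by norm_num), hU 1 0 (by norm_num), hU 0 4 (by norm_num), hU 0 3 (by norm_num)]
      rw [show v 0 = (1:Polynomial (ZMod 2)) from rfl, show v 1 = (X:Polynomial (ZMod 2)) from rfl, show v 2 = X^2 from rfl, show v 3 = X^3+X^2+X from rfl, show v 4 = X^4 from rfl]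
      unfold Fp Gp
      linear_combination (1*X^1 + 3*X^2 + 7*X^3 + 21*X^4 + 88*X^5 + 318*X^6 + 855*X^7 + 1738*X^8 + 2736*X^9 + 3383*X^10 + 3300*X^11 + 2530*X^12 + 1507*X^13 + 683*X^14 + 227*X^15 + 51*X^16 + 6*X^17 : Polynomial (ZMod 2)) * h2
    · have key : Fp ^ 4 = Gp^4 * X^0 + Gp^1 * X^2 + Gp^1 * X^1 + Gp^1 * X^0 + Gp^0 * X^5 + Gp^0 * X^4 := by
        unfold Fp Gp
        linear_combination (9*X^5 + 94*X^6 + 569*X^7 + 2422*X^8 + 7752*X^9 + 19380*X^10 + 38760*X^11 + 62985*X^12 + 83980*X^13 + 92378*X^14 + 83980*X^15 + 62985*X^16 + 38760*X^17 + 19380*X^18 + 7752*X^19 + 2422*X^20 + 568*X^21 + 92*X^22 + 8*X^23 : Polynomial (ZMod 2)) * h2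
      rw [key]
      try simp only [map_add]
      rw [hU 4 0 (by norm_num), hU 1 2 (by norm_num), hU 1 1 (by norm_num), hU 1 0 (by norm_num), hU 0 5 (by norm_num), hU 0 4 (by norm_num)]
      rw [show v 0 = (1:Polynomial (ZMod 2)) from rfl, show v 1 = (X:Polynomial (ZMod 2)) from rfl, show v 2 = X^2 from rfl, show v 4 = X^4 from rfl, show v 5 = X^5+X^4+X from rfl]
      unfold Fp Gp
      linear_combination (1*X^1 + 3*X^2 + 8*X^3 + 14*X^4 + 23*X^5 + 103*X^6 + 573*X^7 + 2423*X^8 + 7752*X^9 + 19380*X^10 + 38760*X^11 + 62985*X^12 + 83980*X^13 + 92378*X^14 + 83980*X^15 + 62985*X^16 + 38760*X^17 + 19380*X^18 + 7752*X^19 + 2422*X^20 + 568*X^21 + 92*X^22 + 8*X^23 : Polynomial (ZMod 2)) * h2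
  · have key : Fp ^ 5 = Gp^5 * X^0 + Gp^4 * X^2 + Gp^4 * X^1 + Gp^2 * X^2 + Gp^2 * X^1 + Gp^2 * X^0 + Gp^1 * X^5 + Gp^1 * X^0 := by
      unfold Fp Gp
      linear_combination (12*X^6 + 150*X^7 + 1150*X^8 + 6325*X^9 + 26564*X^10 + 88548*X^11 + 240348*X^12 + 540786*X^13 + 1021487*X^14 + 1634380*X^15 + 2228700*X^16 + 2600150*X^17 + 2600150*X^18 + 2228700*X^19 + 1634380*X^20 + 1021487*X^21 + 540785*X^22 + 240345*X^23 + 88545*X^24 + 26562*X^25 + 6322*X^26 + 1145*X^27 + 145*X^28 + 10*X^29 : Polynomial (ZMod 2)) * h2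
    rw [key]
    try simp only [map_add]
    rw [hU 5 0 (by norm_num), hU 4 2 (by norm_num), hU 4 1 (by norm_num), hU 2 2 (by norm_num), hU 2 1 (by norm_num), hU 2 0 (by norm_num), hU 1 5 (by norm_num), hU 1 0 (by norm_num)]
    rw [show v 0 = (1:Polynomial (ZMod 2)) from rfl, show v 1 = (X:Polynomial (ZMod 2)) from rfl, show v 2 = X^2 from rfl, show v 5 = X^5+X^4+X from rfl]
    unfold Fp Gp
    linear_combination (1*X^2 + 8*X^3 + 33*X^4 + 94*X^5 + 216*X^6 + 554*X^7 + 2161*X^8 + 9616*X^9 + 36930*X^10 + 115770*X^11 + 298518*X^12 + 642538*X^13 + 1168453*X^14 + 1810738*X^15 + 2405058*X^16 + 2747115*X^17 + 2701895*X^18 + 2286840*X^19 + 1661512*X^20 + 1031662*X^21 + 543780*X^22 + 241015*X^23 + 88655*X^24 + 26575*X^25 + 6323*X^26 + 1145*X^27 + 145*X^28 + 10*X^29 : Polynomial (ZMod 2)) * h2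

end
end

section
/- For every n ≥ 0, the elements P_n = U(F^n) satisfy the recurrence P_{n+6} + F^2·P_{n+4} + F^4·P_{n+2} + F^6·P_n + F·P_{n+1} = 0 in (ZMod 2)[r]. -/
open Polynomial

noncomputable section

lemma hX1_monic : ((X : Polynomial (ZMod 2)) + 1).Monic := by
  simpa using monic_X_add_C (1 : ZMod 2)

lemma Gp_monic : Gp.Monic := (monic_X_pow 5).mul hX1_monic

lemma Gp_natDegree : Gp.natDegree = 6 := by
  rw [Gp, (monic_X_pow 5).natDegree_mul hX1_monic, natDegree_X_pow]
  have : ((X : Polynomial (ZMod 2)) + 1).natDegree = 1 := by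
    simpa using natDegree_X_add_C (1 : ZMod 2)
  omega

lemma basis_monic (k i : ℕ) : (Gp ^ k * X ^ i).Monic :=
  (Gp_monic.pow k).mul (monic_X_pow i)

lemma basis_deg (k i : ℕ) : (Gp ^ k * X ^ i).natDegree = 6 * k + i := by
  rw [(Gp_monic.pow k).natDegree_mul (monic_X_pow i), Gp_monic.natDegree_pow,
    natDegree_X_pow, Gp_natDegree]
  omega

lemma mem_span (f : Polynomial (ZMod 2)) :
    f ∈ Submodule.span (ZMod 2) {p | ∃ k i : ℕ, i ≤ 5 ∧ p = Gp ^ k * X ^ i} := by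
  set S := Submodule.span (ZMod 2) {p | ∃ k i : ℕ, i ≤ 5 ∧ p = Gp ^ k * X ^ i} with hS
  generalize hd : f.natDegree = d
  induction d using Nat.strong_induction_on generalizing f with
  | _ d ih =>
    by_cases hf0 : f = 0
    · simp [hf0]
    set b : Polynomial (ZMod 2) := Gp ^ (d / 6) * X ^ (d % 6) with hb
    have hbmem : b ∈ S := Submodule.subset_span ⟨d / 6, d % 6, by omega, rfl⟩
    have hbdeg : b.natDegree = d := by rw [hb, basis_deg]; omega
    have hfm : f.Monic := by
      have h1 : f.leadingCoeff ≠ 0 := leadingCoeff_ne_zero.mpr hf0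
      have h2 : ∀ c : ZMod 2, c ≠ 0 → c = 1 := by decide
      exact h2 _ h1
    have hcoeff : (f + b).coeff d = 0 := by
      have h1 : f.coeff d = 1 := by rw [← hd]; exact hfm
      have h2 : b.coeff d = 1 := by
        have h3 := basis_monic (d / 6) (d % 6)
        rw [← hb] at h3
        rw [← hbdeg]; exact h3
      rw [coeff_add, h1, h2]; decide
    have hle : (f + b).natDegree ≤ d := by
      refine (natDegree_add_le f b).trans ?_
      rw [hd, hbdeg]; omega
    have hlt : (f + b).natDegree < d ∨ d = 0 := by
      rcases Nat.eq_zero_or_pos d with h | h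
      · right; exact h
      · left
        rcases lt_or_eq_of_le hle with h' | h'
        · exact h'
        · by_cases hz : f + b = 0
          · rw [hz]; simpa using h
          · exfalso
            have hne : (f + b).leadingCoeff ≠ 0 := leadingCoeff_ne_zero.mpr hz
            rw [leadingCoeff, h'] at hne
            exact hne hcoeff
    have hfb : f = (f + b) + b := by
      rw [add_assoc, CharTwo.add_self_eq_zero, add_zero]
    rcases hlt with h | h
    · have := ih _ h (f + b) rfl
      rw [hfb]; exact S.add_mem this hbmem
    · -- d = 0: f is a monic constant, so f = 1 = b
      have : f = b := by
        have hb1 : b = 1 := by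
          rw [hb]; subst h; norm_num
        rw [hb1]
        rw [hfm.natDegree_eq_zero.mp (hd.trans h)]
      rw [this]; exact hbmem

lemma htwo : (2 : Polynomial (ZMod 2)) = 0 := by
  exact_mod_cast CharP.cast_eq_zero (Polynomial (ZMod 2)) 2

lemma h8 : ((X : Polynomial (ZMod 2)) + 1) ^ 8 = X ^ 8 + 1 := by
  have := add_pow_char_pow (R := Polynomial (ZMod 2)) (p := 2) (n := 3) (x := X) (y := 1)
  simpa using this

lemma key6 : Fp ^ 6 = Gp ^ 1 * Fp ^ 1 + Gp ^ 2 * Fp ^ 4 + Gp ^ 4 * Fp ^ 2 + Gp ^ 6 * Fp ^ 0 := by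
  unfold Fp Gp
  linear_combination (X^6*(X+1)^6*((X+1)^16 + (X+1)^8 + X^8 + 1 - X^16)) * h8
    + (X^6*(X+1)^6*(X^8 - X^24)) * htwo

lemma UG_mul (U : Polynomial (ZMod 2) →ₗ[ZMod 2] Polynomial (ZMod 2)) (hU : IsU U)
    (f : Polynomial (ZMod 2)) : U (Gp * f) = Fp * U f := by
  induction mem_span f using Submodule.span_induction with
  | mem x hx =>
    obtain ⟨k, i, hi, rfl⟩ := hx
    rw [← mul_assoc, ← pow_succ', hU (k + 1) i hi, hU k i hi, pow_succ', mul_assoc]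
  | zero => simp
  | add x y _ _ hx hy => rw [mul_add, map_add, map_add, hx, hy, mul_add]
  | smul a x _ hx => rw [mul_smul_comm, map_smul, map_smul, hx, mul_smul_comm]

lemma UG_pow_mul (U : Polynomial (ZMod 2) →ₗ[ZMod 2] Polynomial (ZMod 2)) (hU : IsU U)
    (k : ℕ) (f : Polynomial (ZMod 2)) : U (Gp ^ k * f) = Fp ^ k * U f := by
  induction k with
  | zero => simp
  | succ k ih =>
    rw [pow_succ', mul_assoc, UG_mul U hU, ih, pow_succ', mul_assoc]

theorem UF_recurrence (U : Polynomial (ZMod 2) →ₗ[ZMod 2] Polynomial (ZMod 2)) (hU : IsU U)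
    (n : ℕ) :
    U (Fp ^ (n + 6)) + Fp ^ 2 * U (Fp ^ (n + 4)) + Fp ^ 4 * U (Fp ^ (n + 2))
      + Fp ^ 6 * U (Fp ^ n) + Fp * U (Fp ^ (n + 1)) = 0 := by
  have key : Fp ^ (n + 6)
      = Gp ^ 1 * Fp ^ (n + 1) + Gp ^ 2 * Fp ^ (n + 4) + Gp ^ 4 * Fp ^ (n + 2)
        + Gp ^ 6 * Fp ^ n := by
    have h : Fp ^ (n + 6) = Fp ^ n * Fp ^ 6 := by ring
    rw [h, key6]; ring
  rw [key, map_add, map_add, map_add, UG_pow_mul U hU, UG_pow_mul U hU,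
    UG_pow_mul U hU, UG_pow_mul U hU]
  linear_combination (Fp ^ 1 * U (Fp ^ (n + 1)) + Fp ^ 2 * U (Fp ^ (n + 4))
    + Fp ^ 4 * U (Fp ^ (n + 2)) + Fp ^ 6 * U (Fp ^ n)) * htwo

end
end

section
/- (a) If n ≡ 0 (mod 12), then the coefficient of t^k in C_n vanishes for all k > n−4. (b) If n ≡ 2 (mod 12), then the coefficient of t^k in C_n + C_{n−1} vanishes for all k > n−4. (c) If n ≡ 8 (mod 24), then the coefficient of t^k in C_n vanishes for all k > n−6. (d) If n ≡ 20 (mod 24), then the coefficient of t^k in C_n + C_{n−2} vanishes for all k > n−6. -/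
open Polynomial

noncomputable section

/-- Top-window data: for `n ≥ 8`, the coefficients of `C n` in degrees `n-8 .. n`
depend only on `n % 48`; `maskL[r]` encodes them as a bitmask. -/
def maskL : List ℕ := [0, 128, 64, 64, 64, 176, 64, 244, 4, 124, 64, 222, 17, 150, 85, 116, 68,
  128, 64, 232, 20, 88, 84, 254, 1, 141, 65, 75, 68, 179, 64, 255, 0, 112, 64, 220, 16, 152, 84,
  126, 65, 129, 65, 225, 17, 85, 85, 255]

def g (r k : ℕ) : ZMod 2 := ((maskL.getD r 0 >>> k) % 2 : ℕ)

/-- `A n k` is the coefficient of `C n` at degree `(n - 8) + k` (for `n ≥ 8`). -/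
def A (n k : ℕ) : ZMod 2 := g (n % 48) k

lemma maskL_lt (r : ℕ) : maskL.getD r 0 < 512 := by
  rcases lt_or_ge r 48 with h | h
  · have : ∀ r : Fin 48, maskL.getD r.1 0 < 512 := by decide
    exact this ⟨r, h⟩
  · rw [List.getD_eq_default]
    · norm_num
    · simp [maskL]; omega

lemma g_eq_zero (r k : ℕ) (hk : 9 ≤ k) : g r k = 0 := by
  unfold g
  have h1 : maskL.getD r 0 >>> k = 0 := by
    rw [Nat.shiftRight_eq_div_pow]
    apply Nat.div_eq_of_lt
    calc maskL.getD r 0 < 512 := maskL_lt r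
    _ ≤ 2 ^ k := by calc (512:ℕ) = 2 ^ 9 := by norm_num
                    _ ≤ 2 ^ k := Nat.pow_le_pow_right (by norm_num) hk
  rw [h1]
  norm_num

lemma A_eq_zero (n k : ℕ) (hk : 9 ≤ k) : A n k = 0 := g_eq_zero _ _ hk

lemma key_fin : ∀ r : Fin 48, ∀ k : Fin 9,
    g ((r.1+13)%48) (k.1+1) + (g ((r.1+8)%48) k.1 + (g ((r.1+8)%48) (k.1+1) +
      (g ((r.1+8)%48) (k.1+4) + g ((r.1+8)%48) (k.1+5)))) +
    ((if k.1 = 3 then (1:ZMod 2) else 0) + (if k.1 = 4 then 1 else 0)) = g ((r.1+14)%48) k.1 := by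
  decide

lemma key_s14 (m k : ℕ) :
    A (m+13) (k+1) + (A (m+8) k + (A (m+8) (k+1) + (A (m+8) (k+4) + A (m+8) (k+5)))) +
    ((if k = 3 then (1:ZMod 2) else 0) + (if k = 4 then 1 else 0)) = A (m+14) k := by
  have h13 : (m+13) % 48 = (m % 48 + 13) % 48 := by omega
  have h14 : (m+14) % 48 = (m % 48 + 14) % 48 := by omega
  have h8 : (m+8) % 48 = (m % 48 + 8) % 48 := by omega
  unfold A
  rw [h13, h14, h8]
  rcases lt_or_ge k 9 with hk | hk
  · exact key_fin ⟨m % 48, Nat.mod_lt _ (by norm_num)⟩ ⟨k, hk⟩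
  · rw [if_neg (by omega), if_neg (by omega),
      g_eq_zero _ _ (by omega), g_eq_zero _ _ (by omega), g_eq_zero _ _ (by omega),
      g_eq_zero _ _ (by omega), g_eq_zero _ _ (by omega), g_eq_zero _ _ (by omega)]
    norm_num

lemma inv (C : ℕ → Polynomial (ZMod 2)) (hC : IsC C) :
    ∀ n k, (C (n+8)).coeff (n+k) = A (n+8) k := by
  obtain ⟨h0, h1, h2, h3, h4, h5, hrec⟩ := hC
  have h2z := CharTwo.two_eq_zero (R := Polynomial (ZMod 2))
  have n3 : (3 : Polynomial (ZMod 2)) = 1 := by linear_combination h2z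
  have n4 : (4 : Polynomial (ZMod 2)) = 0 := by linear_combination 2 * h2z
  have e6 : C 6 = X^4 := by
    have h := hrec 0; rw [h0, h5] at h; rw [h]; ring_nf; simp [CharTwo.two_eq_zero, n3, n4]
  have e7 : C 7 = X^6+X^5+X^4+X^3+X := by
    have h := hrec 1; rw [h1, e6] at h; rw [h]; ring_nf; simp [CharTwo.two_eq_zero, n3, n4]
  have e8 : C 8 = X^2 := by
    have h := hrec 2; rw [h2, e7] at h; rw [h]; ring_nf; simp [CharTwo.two_eq_zero, n3, n4]
  have e9 : C 9 = X^7+X^6+X^5+X^4+X^3 := by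
    have h := hrec 3; rw [h3, e8] at h; rw [h]; ring_nf; simp [CharTwo.two_eq_zero, n3, n4]
  have e10 : C 10 = X^8 := by
    have h := hrec 4; rw [h4, e9] at h; rw [h]; ring_nf; simp [CharTwo.two_eq_zero, n3, n4]
  have e11 : C 11 = X^10+X^9+X^7+X^6+X^5+X^4+X^2 := by
    have h := hrec 5; rw [h5, e10] at h; rw [h]; ring_nf; simp [CharTwo.two_eq_zero, n3, n4]
  have e12 : C 12 = X^8+X^4+X^2 := by
    have h := hrec 6; rw [e6, e11] at h; rw [h]; ring_nf; simp [CharTwo.two_eq_zero, n3, n4]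
  have e13 : C 13 = X^12+X^9+X^7+X^6+X^3 := by
    have h := hrec 7; rw [e7, e12] at h; rw [h]; ring_nf; simp [CharTwo.two_eq_zero, n3, n4]
  intro n
  induction n using Nat.strong_induction_on with
  | _ n ih =>
    match n with
    | 0 =>
      intro k
      rcases lt_or_ge k 9 with hk | hk
      · interval_cases k <;> simp [e8, A, g, maskL, coeff_X_pow] <;> decide
      · rw [A_eq_zero _ _ hk, e8, coeff_X_pow, if_neg (by omega)]
    | 1 =>
      intro k
      rcases lt_or_ge k 9 with hk | hk
      · interval_cases k <;>
          simp [e9, A, g, maskL, coeff_X_pow, coeff_add] <;> decide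
      · rw [A_eq_zero _ _ hk, e9]
        simp only [coeff_add, coeff_X_pow]
        rw [if_neg (by omega), if_neg (by omega), if_neg (by omega), if_neg (by omega),
          if_neg (by omega)]
        norm_num
    | 2 =>
      intro k
      rcases lt_or_ge k 9 with hk | hk
      · interval_cases k <;> simp [e10, A, g, maskL, coeff_X_pow] <;> decide
      · rw [A_eq_zero _ _ hk, e10, coeff_X_pow, if_neg (by omega)]
    | 3 =>
      intro k
      rcases lt_or_ge k 9 with hk | hk
      · interval_cases k <;>
          simp [e11, A, g, maskL, coeff_X_pow, coeff_add] <;> decide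
      · rw [A_eq_zero _ _ hk, e11]
        simp only [coeff_add, coeff_X_pow]
        rw [if_neg (by omega), if_neg (by omega), if_neg (by omega), if_neg (by omega),
          if_neg (by omega), if_neg (by omega), if_neg (by omega)]
        norm_num
    | 4 =>
      intro k
      rcases lt_or_ge k 9 with hk | hk
      · interval_cases k <;>
          simp [e12, A, g, maskL, coeff_X_pow, coeff_add] <;> decide
      · rw [A_eq_zero _ _ hk, e12]
        simp only [coeff_add, coeff_X_pow]
        rw [if_neg (by omega), if_neg (by omega), if_neg (by omega)]
        norm_num
    | 5 =>
      intro k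
      rcases lt_or_ge k 9 with hk | hk
      · interval_cases k <;>
          simp [e13, A, g, maskL, coeff_X_pow, coeff_add] <;> decide
      · rw [A_eq_zero _ _ hk, e13]
        simp only [coeff_add, coeff_X_pow]
        rw [if_neg (by omega), if_neg (by omega), if_neg (by omega), if_neg (by omega),
          if_neg (by omega)]
        norm_num
    | (m+6) =>
      intro k
      have hr := hrec (m+8)
      have c1 : (C (m+8+5)).coeff (m+6+k) = A (m+13) (k+1) := by
        rw [show m+8+5 = m+5+8 by omega, show m+6+k = m+5+(k+1) by omega,
          ih (m+5) (by omega), show m+5+8 = m+13 by omega]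
      have emul : (X^6+X^5+X^2+X : Polynomial (ZMod 2)) * C (m+8) =
          X^6 * C (m+8) + (X^5 * C (m+8) + (X^2 * C (m+8) + X^1 * C (m+8))) := by ring
      have d6 : ((X:Polynomial (ZMod 2))^6 * C (m+8)).coeff (m+6+k) = A (m+8) k := by
        rw [show m+6+k = (m+k)+6 by omega, coeff_X_pow_mul, ih m (by omega)]
      have d5 : ((X:Polynomial (ZMod 2))^5 * C (m+8)).coeff (m+6+k) = A (m+8) (k+1) := by
        rw [show m+6+k = (m+(k+1))+5 by omega, coeff_X_pow_mul, ih m (by omega)]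
      have d2 : ((X:Polynomial (ZMod 2))^2 * C (m+8)).coeff (m+6+k) = A (m+8) (k+4) := by
        rw [show m+6+k = (m+(k+4))+2 by omega, coeff_X_pow_mul, ih m (by omega)]
      have d1 : ((X:Polynomial (ZMod 2))^1 * C (m+8)).coeff (m+6+k) = A (m+8) (k+5) := by
        rw [show m+6+k = (m+(k+5))+1 by omega, coeff_X_pow_mul, ih m (by omega)]
      have emon : (X:Polynomial (ZMod 2))^(m+8) * (X^2+X) = X^(m+9) + X^(m+10) := by ring
      have d0 : ((X:Polynomial (ZMod 2))^(m+8) * (X^2+X)).coeff (m+6+k) =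
          (if k = 3 then (1:ZMod 2) else 0) + (if k = 4 then 1 else 0) := by
        rw [emon, coeff_add, coeff_X_pow, coeff_X_pow]
        split_ifs <;> first | (exfalso; omega) | decide
      rw [show m+6+8 = m+8+6 by omega, hr, emul]
      rw [coeff_add, coeff_add, coeff_add, coeff_add, coeff_add]
      rw [c1, d6, d5, d2, d1, d0, show m+8+6 = m+14 by omega]
      rw [← key_s14 m k]

lemma claim_a : ∀ s : Fin 48, s.1 % 12 = 0 → ∀ j : Fin 9, 5 ≤ j.1 → g s.1 j.1 = 0 := by decide

lemma claim_b : ∀ s : Fin 48, s.1 % 12 = 2 → ∀ j : Fin 9, 5 ≤ j.1 →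
    g s.1 j.1 + g ((s.1+47)%48) (j.1+1) = 0 := by decide

lemma claim_c : ∀ s : Fin 48, s.1 % 24 = 8 → ∀ j : Fin 9, 3 ≤ j.1 → g s.1 j.1 = 0 := by decide

lemma claim_d : ∀ s : Fin 48, s.1 % 24 = 20 → ∀ j : Fin 9, 3 ≤ j.1 →
    g s.1 j.1 + g ((s.1+46)%48) (j.1+2) = 0 := by decide

theorem C_coeff_bounds (C : ℕ → Polynomial (ZMod 2)) (hC : IsC C) (n : ℕ) :
    (n % 12 = 0 → ∀ k : ℕ, n - 4 < k → (C n).coeff k = 0) ∧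
    (n % 12 = 2 → ∀ k : ℕ, n - 4 < k → (C n + C (n - 1)).coeff k = 0) ∧
    (n % 24 = 8 → ∀ k : ℕ, n - 6 < k → (C n).coeff k = 0) ∧
    (n % 24 = 20 → ∀ k : ℕ, n - 6 < k → (C n + C (n - 2)).coeff k = 0) := by
  have hinv := inv C hC
  have hs48 : n % 48 < 48 := Nat.mod_lt _ (by norm_num)
  refine ⟨?_, ?_, ?_, ?_⟩
  · intro hn k hk
    rcases Nat.eq_zero_or_pos n with h0 | hpos
    · subst h0; rw [hC.1]; simp
    · have hn12 : 12 ≤ n := by omega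
      set j := k - (n - 8) with hj
      have hjge : 5 ≤ j := by omega
      have h1 : (C n).coeff k = A n j := by
        rw [show n = (n-8)+8 by omega, show k = (n-8)+j by omega]
        exact hinv (n-8) j
      rw [h1]
      rcases lt_or_ge j 9 with hj9 | hj9
      · have hh : n % 48 % 12 = 0 := by
          rw [Nat.mod_mod_of_dvd n (by norm_num)]; exact hn
        exact claim_a ⟨n % 48, hs48⟩ hh ⟨j, hj9⟩ hjge
      · exact A_eq_zero _ _ hj9
  · intro hn k hk
    rcases lt_or_ge n 14 with hsm | hn14
    · have h2 : n = 2 := by omega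
      subst h2
      rw [hC.2.2.1, hC.2.1, CharTwo.add_self_eq_zero]
      simp
    · set j := k - (n - 8) with hj
      have hjge : 5 ≤ j := by omega
      rw [coeff_add]
      have h1 : (C n).coeff k = A n j := by
        rw [show n = (n-8)+8 by omega, show k = (n-8)+j by omega]
        exact hinv (n-8) j
      have h2 : (C (n-1)).coeff k = A (n-1) (j+1) := by
        rw [show n-1 = (n-9)+8 by omega, show k = (n-9)+(j+1) by omega]
        exact hinv (n-9) (j+1)
      rw [h1, h2]
      rcases lt_or_ge j 9 with hj9 | hj9
      · have hm : (n-1) % 48 = (n % 48 + 47) % 48 := by omega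
        unfold A
        rw [hm]
        have hh : n % 48 % 12 = 2 := by
          rw [Nat.mod_mod_of_dvd n (by norm_num)]; exact hn
        exact claim_b ⟨n % 48, hs48⟩ hh ⟨j, hj9⟩ hjge
      · rw [A_eq_zero _ _ hj9, A_eq_zero _ _ (by omega)]
        norm_num
  · intro hn k hk
    have hn8 : 8 ≤ n := by omega
    set j := k - (n - 8) with hj
    have hjge : 3 ≤ j := by omega
    have h1 : (C n).coeff k = A n j := by
      rw [show n = (n-8)+8 by omega, show k = (n-8)+j by omega]
      exact hinv (n-8) j
    rw [h1]
    rcases lt_or_ge j 9 with hj9 | hj9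
    · have hh : n % 48 % 24 = 8 := by
        rw [Nat.mod_mod_of_dvd n (by norm_num)]; exact hn
      exact claim_c ⟨n % 48, hs48⟩ hh ⟨j, hj9⟩ hjge
    · exact A_eq_zero _ _ hj9
  · intro hn k hk
    have hn20 : 20 ≤ n := by omega
    set j := k - (n - 8) with hj
    have hjge : 3 ≤ j := by omega
    rw [coeff_add]
    have h1 : (C n).coeff k = A n j := by
      rw [show n = (n-8)+8 by omega, show k = (n-8)+j by omega]
      exact hinv (n-8) j
    have h2 : (C (n-2)).coeff k = A (n-2) (j+2) := by
      rw [show n-2 = (n-10)+8 by omega, show k = (n-10)+(j+2) by omega]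
      exact hinv (n-10) (j+2)
    rw [h1, h2]
    rcases lt_or_ge j 9 with hj9 | hj9
    · have hm : (n-2) % 48 = (n % 48 + 46) % 48 := by omega
      unfold A
      rw [hm]
      have hh : n % 48 % 24 = 20 := by
        rw [Nat.mod_mod_of_dvd n (by norm_num)]; exact hn
      exact claim_d ⟨n % 48, hs48⟩ hh ⟨j, hj9⟩ hjge
    · rw [A_eq_zero _ _ hj9, A_eq_zero _ _ (by omega)]
      norm_num

end
end

section
/- (a) If n ≡ 6 (mod 24), then the coefficient of t^k in C_n + C_{n−1} + C_{n−2} + C_{n−3} + C_{n−4} + C_{n−5} vanishes for all k > n−8, and likewise the coefficient of t^k in C_n + C_{n−1} + C_{n−2} + C_{n−3} vanishes for all k > n−8. (b) If n ≡ 18 (mod 24), then the coefficient of t^k in C_n + C_{n−1} vanishes for all k > n−8, and likewise the coefficient of t^k in C_n + C_{n−1} + C_{n−4} + C_{n−5} vanishes for all k > n−8. -/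
open Polynomial

noncomputable section

/-- Table of the top 8 coefficients of `C n` (degrees `n-8+j`, `0 ≤ j < 8`), for `n ≥ 8`,
depending only on `n % 48`. -/
def tbl : List (List (ZMod 2)) := [[0,0,0,0,0,0,0,0],
 [0,0,0,0,0,0,0,1],[0,0,0,0,0,0,1,0],[0,0,0,0,0,0,1,0],[0,0,0,0,0,0,1,0],
 [0,0,0,0,1,1,0,1],[0,0,0,0,0,0,1,0],[0,0,1,0,1,1,1,1],[0,0,1,0,0,0,0,0],
 [0,0,1,1,1,1,1,0],[0,0,0,0,0,0,1,0],[0,1,1,1,1,0,1,1],[1,0,0,0,1,0,0,0],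
 [0,1,1,0,1,0,0,1],[1,0,1,0,1,0,1,0],[0,0,1,0,1,1,1,0],[0,0,1,0,0,0,1,0],
 [0,0,0,0,0,0,0,1],[0,0,0,0,0,0,1,0],[0,0,0,1,0,1,1,1],[0,0,1,0,1,0,0,0],
 [0,0,0,1,1,0,1,0],[0,0,1,0,1,0,1,0],[0,1,1,1,1,1,1,1],[1,0,0,0,0,0,0,0],
 [1,0,1,1,0,0,0,1],[1,0,0,0,0,0,1,0],[1,1,0,1,0,0,1,0],[0,0,1,0,0,0,1,0],
 [1,1,0,0,1,1,0,1],[0,0,0,0,0,0,1,0],[1,1,1,1,1,1,1,1],[0,0,0,0,0,0,0,0],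
 [0,0,0,0,1,1,1,0],[0,0,0,0,0,0,1,0],[0,0,1,1,1,0,1,1],[0,0,0,0,1,0,0,0],
 [0,0,0,1,1,0,0,1],[0,0,1,0,1,0,1,0],[0,1,1,1,1,1,1,0],[1,0,0,0,0,0,1,0],
 [1,0,0,0,0,0,0,1],[1,0,0,0,0,0,1,0],[1,0,0,0,0,1,1,1],[1,0,0,0,1,0,0,0],
 [1,0,1,0,1,0,1,0],[1,0,1,0,1,0,1,0],[1,1,1,1,1,1,1,1]]

def T (r j : ℕ) : ZMod 2 := if j < 8 then (tbl.getD r []).getD j 0 else 0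

lemma Tzero (r j : ℕ) (h : 8 ≤ j) : T r j = 0 := by simp [T, Nat.not_lt.2 h]

lemma Tstep8 : ∀ r < 48, ∀ j < 8, T ((r+6)%48) j = T ((r+5)%48) (j+1) + T r j +
    T r (j+1) + T r (j+4) + T r (j+5) + (if j = 3 then 1 else 0) + (if j = 4 then 1 else 0) := by
  decide

lemma Tstep (r : ℕ) (hr : r < 48) (j : ℕ) : T ((r+6)%48) j = T ((r+5)%48) (j+1) + T r j +
    T r (j+1) + T r (j+4) + T r (j+5) + (if j = 3 then 1 else 0) + (if j = 4 then 1 else 0) := by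
  rcases lt_or_ge j 8 with hj | hj
  · exact Tstep8 r hr j hj
  · rw [Tzero _ _ (by omega), Tzero _ _ (by omega), Tzero _ _ (by omega),
      Tzero _ _ (by omega), Tzero _ _ (by omega), Tzero _ _ (by omega),
      if_neg (by omega), if_neg (by omega)]
    simp

/-- Statement that the top coefficients of `C (k+8)` are given by the table. -/
def Q (C : ℕ → Polynomial (ZMod 2)) (k : ℕ) : Prop :=
  ∀ j, (C (k+8)).coeff (k+j) = T ((k+8)%48) j

set_option maxHeartbeats 2000000 in
lemma invC (C : ℕ → Polynomial (ZMod 2)) (hC : IsC C) : ∀ m, Q C m := by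
  obtain ⟨h0, h1, h2, h3, h4, h5, hr⟩ := hC
  have two := CharTwo.two_eq_zero (R := (ZMod 2)[X])
  have three : (3 : (ZMod 2)[X]) = 1 := by rw [show (3:(ZMod 2)[X]) = 2+1 by norm_num, two]; ring
  have four : (4 : (ZMod 2)[X]) = 0 := by rw [show (4:(ZMod 2)[X]) = 2*2 by norm_num, two]; ring
  have h6 : C 6 = X ^ 4 := by
    have h := hr 0; rw [h0, h5] at h; rw [h]; ring_nf; simp [two, three, four]
  have h7 : C 7 = X^6+X^5+X^4+X^3+X := by
    have h := hr 1; rw [h1, h6] at h; rw [h]; ring_nf; simp [two, three, four]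
  have h8 : C 8 = X^2 := by
    have h := hr 2; rw [h2, h7] at h; rw [h]; ring_nf; simp [two, three, four]
  have h9 : C 9 = X^7+X^6+X^5+X^4+X^3 := by
    have h := hr 3; rw [h3, h8] at h; rw [h]; ring_nf; simp [two, three, four]
  have h10 : C 10 = X^8 := by
    have h := hr 4; rw [h4, h9] at h; rw [h]; ring_nf; simp [two, three, four]
  have h11 : C 11 = X^10+X^9+X^7+X^6+X^5+X^4+X^2 := by
    have h := hr 5; rw [h5, h10] at h; rw [h]; ring_nf; simp [two, three, four]
  have h12 : C 12 = X^8+X^4+X^2 := by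
    have h := hr 6; rw [h6, h11] at h; rw [h]; ring_nf; simp [two, three, four]
  have h13 : C 13 = X^12+X^9+X^7+X^6+X^3 := by
    have h := hr 7; rw [h7, h12] at h; rw [h]; ring_nf; simp [two, three, four]
  have H : ∀ m, Q C m ∧ Q C (m+1) ∧ Q C (m+2) ∧ Q C (m+3) ∧ Q C (m+4) ∧ Q C (m+5) := by
    intro m
    induction m with
    | zero =>
      refine ⟨?_, ?_, ?_, ?_, ?_, ?_⟩ <;> simp only [Q] <;> intro j <;> norm_num <;>
        [rw [h8]; rw [h9]; rw [h10]; rw [h11]; rw [h12]; rw [h13]] <;>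
        rcases lt_or_ge j 8 with hj | hj <;>
        first
          | (interval_cases j <;> norm_num [coeff_add, coeff_X_pow, T, tbl])
          | (simp only [coeff_add, coeff_X_pow, T, if_neg (show ¬ j < 8 by omega)]
             split_ifs <;> first | omega | simp)
    | succ m ih =>
      obtain ⟨q0, q1, q2, q3, q4, q5⟩ := ih
      refine ⟨q1, ?_, ?_, ?_, ?_, ?_⟩
      · rw [show m+1+1 = m+2 from by omega]; exact q2
      · rw [show m+1+2 = m+3 from by omega]; exact q3
      · rw [show m+1+3 = m+4 from by omega]; exact q4
      · rw [show m+1+4 = m+5 from by omega]; exact q5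
      · -- the actual induction step: Q C (m+6)
        rw [show m+1+5 = m+6 from by omega]
        intro j
        rw [show m+6+8 = m+14 from by omega]
        have e : C (m+14) = C (m+13) + (X^6+X^5+X^2+X) * C (m+8) + X^(m+8)*(X^2+X) := by
          have h := hr (m+8)
          rw [show m+8+6 = m+14 from by omega, show m+8+5 = m+13 from by omega] at h
          exact h
        have t5 : (C (m+13)).coeff (m+6+j) = T ((m+13)%48) (j+1) := by
          have := q5 (j+1)
          rw [show m+5+8 = m+13 from by omega, show m+5+(j+1) = m+6+j from by omega] at this
          exact this
        have u6 : ((X:(ZMod 2)[X])^6 * C (m+8)).coeff (m+6+j) = T ((m+8)%48) j := by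
          rw [show m+6+j = (m+j)+6 from by omega, coeff_X_pow_mul]; exact q0 j
        have u5 : ((X:(ZMod 2)[X])^5 * C (m+8)).coeff (m+6+j) = T ((m+8)%48) (j+1) := by
          rw [show m+6+j = (m+(j+1))+5 from by omega, coeff_X_pow_mul]; exact q0 (j+1)
        have u2 : ((X:(ZMod 2)[X])^2 * C (m+8)).coeff (m+6+j) = T ((m+8)%48) (j+4) := by
          rw [show m+6+j = (m+(j+4))+2 from by omega, coeff_X_pow_mul]; exact q0 (j+4)
        have u1 : ((X:(ZMod 2)[X]) * C (m+8)).coeff (m+6+j) = T ((m+8)%48) (j+5) := by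
          rw [show m+6+j = (m+(j+5))+1 from by omega, coeff_X_mul]; exact q0 (j+5)
        have tX : ((X:(ZMod 2)[X])^(m+8)*(X^2+X)).coeff (m+6+j) =
            (if j = 4 then 1 else 0) + (if j = 3 then 1 else 0) := by
          rw [mul_add, ← pow_add, ← pow_succ, coeff_add, coeff_X_pow, coeff_X_pow]
          rcases eq_or_ne j 4 with hj4 | hj4
          · subst hj4; rw [if_pos (by omega), if_neg (by omega), if_pos rfl, if_neg (by omega)]
          · rcases eq_or_ne j 3 with hj3 | hj3
            · subst hj3; rw [if_neg (by omega), if_pos (by omega), if_neg (by omega), if_pos rfl]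
            · rw [if_neg (by omega), if_neg (by omega), if_neg hj4, if_neg hj3]
        rw [e, coeff_add, coeff_add, add_mul, add_mul, add_mul, coeff_add, coeff_add, coeff_add,
          t5, u6, u5, u2, u1, tX]
        have hs := Tstep ((m+8)%48) (Nat.mod_lt _ (by norm_num)) j
        rw [show (m+8)%48+6 = (m+8)%48+6 from rfl] at hs
        rw [show ((m+8)%48+6)%48 = (m+14)%48 from by omega,
          show ((m+8)%48+5)%48 = (m+13)%48 from by omega] at hs
        rw [hs]; ring
  exact fun m => (H m).1

lemma cancelA1 (r : ℕ) (hr : r = 6 ∨ r = 30) : ∀ j, 1 ≤ j →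
    T r j + T (r-1) (j+1) + T (r-2) (j+2) + T (r-3) (j+3) + T (r-4) (j+4) + T (r-5) (j+5) = 0 := by
  intro j hj
  rcases lt_or_ge j 8 with h | h
  · rcases hr with rfl | rfl <;> interval_cases j <;> decide
  · rw [Tzero _ _ (by omega), Tzero _ _ (by omega), Tzero _ _ (by omega),
      Tzero _ _ (by omega), Tzero _ _ (by omega), Tzero _ _ (by omega)]; simp

lemma cancelA2 (r : ℕ) (hr : r = 6 ∨ r = 30) : ∀ j, 1 ≤ j →
    T r j + T (r-1) (j+1) + T (r-2) (j+2) + T (r-3) (j+3) = 0 := by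
  intro j hj
  rcases lt_or_ge j 8 with h | h
  · rcases hr with rfl | rfl <;> interval_cases j <;> decide
  · rw [Tzero _ _ (by omega), Tzero _ _ (by omega), Tzero _ _ (by omega),
      Tzero _ _ (by omega)]; simp

lemma cancelB1 (r : ℕ) (hr : r = 18 ∨ r = 42) : ∀ j, 1 ≤ j →
    T r j + T (r-1) (j+1) = 0 := by
  intro j hj
  rcases lt_or_ge j 8 with h | h
  · rcases hr with rfl | rfl <;> interval_cases j <;> decide
  · rw [Tzero _ _ (by omega), Tzero _ _ (by omega)]; simp

lemma cancelB2 (r : ℕ) (hr : r = 18 ∨ r = 42) : ∀ j, 1 ≤ j →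
    T r j + T (r-1) (j+1) + T (r-4) (j+4) + T (r-5) (j+5) = 0 := by
  intro j hj
  rcases lt_or_ge j 8 with h | h
  · rcases hr with rfl | rfl <;> interval_cases j <;> decide
  · rw [Tzero _ _ (by omega), Tzero _ _ (by omega), Tzero _ _ (by omega),
      Tzero _ _ (by omega)]; simp

/-- Coefficient of `C (n-i)` at `k` in terms of the table, for `n - i ≥ 8`, `k > n - 8`. -/
lemma coeffC (C : ℕ → Polynomial (ZMod 2)) (hC : IsC C) (n i k : ℕ) (hn : 8 + i ≤ n)
    (hk : n - 8 < k) : (C (n-i)).coeff k = T ((n-i)%48) (k-(n-8)+i) := by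
  have h := invC C hC (n-i-8) (k-(n-8)+i)
  rw [show n-i-8+8 = n-i from by omega, show n-i-8+(k-(n-8)+i) = k from by omega] at h
  exact h

theorem C_coeff_bounds' (C : ℕ → Polynomial (ZMod 2)) (hC : IsC C) (n : ℕ) :
    (n % 24 = 6 →
      (∀ k : ℕ, n - 8 < k →
        (C n + C (n - 1) + C (n - 2) + C (n - 3) + C (n - 4) + C (n - 5)).coeff k = 0) ∧
      (∀ k : ℕ, n - 8 < k → (C n + C (n - 1) + C (n - 2) + C (n - 3)).coeff k = 0)) ∧
    (n % 24 = 18 →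
      (∀ k : ℕ, n - 8 < k → (C n + C (n - 1)).coeff k = 0) ∧
      (∀ k : ℕ, n - 8 < k → (C n + C (n - 1) + C (n - 4) + C (n - 5)).coeff k = 0)) := by
  constructor
  · intro h6
    rcases lt_or_ge n 30 with hn | hn
    · -- then n = 6
      have hn6 : n = 6 := by omega
      subst hn6
      obtain ⟨h0, h1, h2, h3, h4, h5, hr⟩ := hC
      have two := CharTwo.two_eq_zero (R := (ZMod 2)[X])
      have c6 : C 6 = X ^ 4 := by
        have h := hr 0; rw [h0, h5] at h; rw [h]; ring_nf; simp [two]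
      constructor <;> intro k _
      · rw [show C 6 + C (6-1) + C (6-2) + C (6-3) + C (6-4) + C (6-5)
            = C 6 + C 5 + C 4 + C 3 + C 2 + C 1 from by norm_num,
          c6, h5, h4, h3, h2, h1,
          show (X:(ZMod 2)[X])^4 + (X^4+X^2+X) + X^2 + X + 1 + 1 = 0 from by ring_nf; simp [two]]
        simp
      · rw [show C 6 + C (6-1) + C (6-2) + C (6-3) = C 6 + C 5 + C 4 + C 3 from by norm_num,
          c6, h5, h4, h3,
          show (X:(ZMod 2)[X])^4 + (X^4+X^2+X) + X^2 + X = 0 from by ring_nf; simp [two]]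
        simp
    · have hr48 : n % 48 = 6 ∨ n % 48 = 30 := by omega
      constructor <;> intro k hk
      · have g0 := coeffC C hC n 0 k (by omega) hk
        have g1 := coeffC C hC n 1 k (by omega) hk
        have g2 := coeffC C hC n 2 k (by omega) hk
        have g3 := coeffC C hC n 3 k (by omega) hk
        have g4 := coeffC C hC n 4 k (by omega) hk
        have g5 := coeffC C hC n 5 k (by omega) hk
        rw [show n - 0 = n from by omega, show n % 48 = n % 48 from rfl] at g0
        rw [show (n-1)%48 = n%48-1 from by omega] at g1
        rw [show (n-2)%48 = n%48-2 from by omega] at g2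
        rw [show (n-3)%48 = n%48-3 from by omega] at g3
        rw [show (n-4)%48 = n%48-4 from by omega] at g4
        rw [show (n-5)%48 = n%48-5 from by omega] at g5
        simp only [coeff_add]
        rw [g0, g1, g2, g3, g4, g5,
          show k-(n-8)+0 = k-(n-8) from by omega, show k-(n-8)+1 = k-(n-8)+1 from rfl]
        exact cancelA1 (n%48) hr48 (k-(n-8)) (by omega)
      · have g0 := coeffC C hC n 0 k (by omega) hk
        have g1 := coeffC C hC n 1 k (by omega) hk
        have g2 := coeffC C hC n 2 k (by omega) hk
        have g3 := coeffC C hC n 3 k (by omega) hk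
        rw [show n - 0 = n from by omega] at g0
        rw [show (n-1)%48 = n%48-1 from by omega] at g1
        rw [show (n-2)%48 = n%48-2 from by omega] at g2
        rw [show (n-3)%48 = n%48-3 from by omega] at g3
        simp only [coeff_add]
        rw [g0, g1, g2, g3, show k-(n-8)+0 = k-(n-8) from by omega]
        exact cancelA2 (n%48) hr48 (k-(n-8)) (by omega)
  · intro h18
    have hn : 18 ≤ n := by omega
    have hr48 : n % 48 = 18 ∨ n % 48 = 42 := by omega
    constructor <;> intro k hk
    · have g0 := coeffC C hC n 0 k (by omega) hk
      have g1 := coeffC C hC n 1 k (by omega) hk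
      rw [show n - 0 = n from by omega] at g0
      rw [show (n-1)%48 = n%48-1 from by omega] at g1
      simp only [coeff_add]
      rw [g0, g1, show k-(n-8)+0 = k-(n-8) from by omega]
      exact cancelB1 (n%48) hr48 (k-(n-8)) (by omega)
    · have g0 := coeffC C hC n 0 k (by omega) hk
      have g1 := coeffC C hC n 1 k (by omega) hk
      have g4 := coeffC C hC n 4 k (by omega) hk
      have g5 := coeffC C hC n 5 k (by omega) hk
      rw [show n - 0 = n from by omega] at g0
      rw [show (n-1)%48 = n%48-1 from by omega] at g1
      rw [show (n-4)%48 = n%48-4 from by omega] at g4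
      rw [show (n-5)%48 = n%48-5 from by omega] at g5
      simp only [coeff_add]
      rw [g0, g1, g4, g5, show k-(n-8)+0 = k-(n-8) from by omega]
      exact cancelB2 (n%48) hr48 (k-(n-8)) (by omega)

end
end
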